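/- Let R be a complete local commutative ring with maximal ideal m, and let α(x) ∈ R⟦x⟧ satisfy α(x) ≡ a_n x^n mod (m, x^{n+1}) with a_n a unit. Then there is a unique factorization α(x) = ε(x)·g(x) with ε(x) a unit of R⟦x⟧ and g(x) a monic polynomial of degree n all of whose lower coefficients lie in m. -/

import Mathlib

open PowerSeries

namespace WPrep

set_option linter.unusedSectionVars false
set_option maxHeartbeats 800000

variable {R : Type*} [CommRing R] (n : ℕ)

noncomputable def sh (f : PowerSeries R) : PowerSeries R :=
  PowerSeries.mk fun i => PowerSeries.coeff (i + n) f

@[simp] lemma coeff_sh (f : PowerSeries R) (i : ℕ) :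
    PowerSeries.coeff i (sh n f) = PowerSeries.coeff (i + n) f :=
  coeff_mk _ _

lemma sh_sub (f g : PowerSeries R) : sh n (f - g) = sh n f - sh n g := by
  ext i; simp [coeff_sh]

lemma sh_add (f g : PowerSeries R) : sh n (f + g) = sh n f + sh n g := by
  ext i; simp [coeff_sh]

lemma sh_X_pow_mul (f : PowerSeries R) : sh n (X ^ n * f) = f := by
  ext i; simp [coeff_sh]

lemma sh_poly {p : Polynomial R} (hp : p.degree < n) : sh n (p : PowerSeries R) = 0 := by
  ext i
  simp only [coeff_sh, Polynomial.coeff_coe, map_zero]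
  exact Polynomial.coeff_eq_zero_of_degree_lt
    (lt_of_lt_of_le hp (by exact_mod_cast Nat.le_add_left n i))

lemma trunc_add_sh (f : PowerSeries R) :
    ((trunc n f : Polynomial R) : PowerSeries R) + X ^ n * sh n f = f := by
  ext i
  simp only [map_add, Polynomial.coeff_coe, coeff_trunc, coeff_X_pow_mul', coeff_sh]
  by_cases h : i < n
  · simp [h, Nat.not_le_of_lt h]
  · simp [h, Nat.le_of_not_lt h, Nat.sub_add_cancel (Nat.le_of_not_lt h)]

lemma coeffs_mul_right {I : Ideal R} {f : PowerSeries R}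
    (hf : ∀ i, PowerSeries.coeff i f ∈ I) (g : PowerSeries R) (i : ℕ) :
    PowerSeries.coeff i (f * g) ∈ I := by
  rw [PowerSeries.coeff_mul]
  exact Ideal.sum_mem _ fun p _ => I.mul_mem_right _ (hf p.1)

lemma coeffs_mul_mul {I J : Ideal R} {f g : PowerSeries R}
    (hf : ∀ i, PowerSeries.coeff i f ∈ I) (hg : ∀ i, PowerSeries.coeff i g ∈ J) (i : ℕ) :
    PowerSeries.coeff i (f * g) ∈ I * J := by
  rw [PowerSeries.coeff_mul]
  exact Ideal.sum_mem _ fun p _ => Ideal.mul_mem_mul (hf p.1) (hg p.2)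

variable [IsLocalRing R] [IsAdicComplete (IsLocalRing.maximalIdeal R) R]

local notation "m" => IsLocalRing.maximalIdeal R

lemma smul_top_eq (k : ℕ) : ((m ^ k : Ideal R) • ⊤ : Submodule R R) = (m ^ k : Ideal R) := by
  rw [smul_eq_mul, Ideal.mul_top]

lemma eq_zero_of_coeffs_mem (d : PowerSeries R)
    (h : ∀ k i, PowerSeries.coeff i d ∈ (m ^ k : Ideal R)) : d = 0 := by
  ext i
  rw [map_zero]
  refine IsHausdorff.haus (I := m) (M := R) inferInstance _ fun k => ?_
  rw [SModEq.zero, smul_top_eq]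
  exact h k i

theorem division (α : PowerSeries R)
    (hlow : ∀ i : ℕ, i < n → PowerSeries.coeff i α ∈ m)
    (hunit : IsUnit (PowerSeries.coeff n α)) (f : PowerSeries R) :
    ∃! p : PowerSeries R × Polynomial R,
      p.2.degree < n ∧ f = p.1 * α + (p.2 : PowerSeries R) := by
  classical
  set P : PowerSeries R := ((trunc n α : Polynomial R) : PowerSeries R) with hPdef
  set U : PowerSeries R := sh n α with hUdef
  have hP : ∀ i, PowerSeries.coeff i P ∈ m := by
    intro i
    simp only [hPdef, Polynomial.coeff_coe, coeff_trunc]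
    split_ifs with h
    · exact hlow i h
    · exact (m).zero_mem
  have hUc : PowerSeries.constantCoeff U = (hunit.unit : R) := by
    simp [hUdef, ← coeff_zero_eq_constantCoeff_apply]
  set V : PowerSeries R := PowerSeries.invOfUnit U hunit.unit with hVdef
  have hUV : U * V = 1 := PowerSeries.mul_invOfUnit U hunit.unit hUc
  have hdecomp : P + X ^ n * U = α := trunc_add_sh n α
  -- the contraction property
  have hcontr : ∀ {k : ℕ} {d : PowerSeries R},
      (∀ i, PowerSeries.coeff i d ∈ (m ^ k : Ideal R)) →
      ∀ i, PowerSeries.coeff i (V * sh n (d * P)) ∈ (m ^ (k + 1) : Ideal R) := by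
    intro k d hd i
    rw [mul_comm]
    refine coeffs_mul_right (fun j => ?_) V i
    rw [coeff_sh, pow_succ]
    exact coeffs_mul_mul hd hP _
  -- a fixed point `Q = V * sh n (f - Q * P)` exists
  have hQex : ∃ Q : PowerSeries R, Q = V * sh n (f - Q * P) := by
    set T : PowerSeries R → PowerSeries R := fun z => V * sh n (f - z * P) with hTdef
    have hTsub : ∀ z w, T z - T w = V * sh n ((w - z) * P) := by
      intro z w
      simp only [hTdef]
      rw [← mul_sub, ← sh_sub]
      ring_nf
    set q : ℕ → PowerSeries R := fun k => Nat.rec 0 (fun _ z => T z) k with hqdef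
    have hq0 : q 0 = 0 := rfl
    have hqs : ∀ k, q (k + 1) = T (q k) := fun k => rfl
    have hstep : ∀ k, ∀ i, PowerSeries.coeff i (q (k + 1) - q k) ∈ (m ^ k : Ideal R) := by
      intro k
      induction k with
      | zero => intro i; rw [pow_zero, Ideal.one_eq_top]; exact Submodule.mem_top
      | succ k ih =>
          intro i
          have : q (k + 2) - q (k + 1) = V * sh n ((q k - q (k + 1)) * P) := by
            rw [hqs (k + 1), hqs k, hTsub]
          rw [this]
          refine hcontr (fun j => ?_) i
          have := (m ^ k : Ideal R).neg_mem (ih j)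
          simpa [map_sub, neg_sub] using this
    have hchain : ∀ k l, k ≤ l → ∀ i,
        PowerSeries.coeff i (q l - q k) ∈ (m ^ k : Ideal R) := by
      intro k l hkl
      induction l with
      | zero =>
          intro i
          have : k = 0 := Nat.le_zero.mp hkl
          subst this; simp
      | succ l ih =>
          intro i
          rcases Nat.lt_or_ge k (l + 1) with h | h
          · have hkle : k ≤ l := Nat.lt_succ_iff.mp h
            have h1 := hstep l i
            have h2 := ih hkle i
            have : q (l + 1) - q k = (q (l + 1) - q l) + (q l - q k) := by ring
            rw [this, map_add]
            exact (m ^ k : Ideal R).add_mem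
              (Ideal.pow_le_pow_right hkle h1) h2
          · have : k = l + 1 := le_antisymm hkl h
            subst this; simp
    have key : ∀ i : ℕ, ∃ L : R, ∀ k, PowerSeries.coeff i (q k) ≡ L
        [SMOD ((m ^ k : Ideal R) • ⊤ : Submodule R R)] := by
      intro i
      refine IsPrecomplete.prec (IsAdicComplete.toIsPrecomplete) ?_
      intro k l hkl
      rw [SModEq.sub_mem, smul_top_eq]
      have := (m ^ k : Ideal R).neg_mem (hchain k l hkl i)
      simpa [map_sub, neg_sub] using this
    choose L hL using key
    set Q : PowerSeries R := PowerSeries.mk L with hQdef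
    have hQq : ∀ k i, PowerSeries.coeff i (Q - q k) ∈ (m ^ k : Ideal R) := by
      intro k i
      have := hL i k
      rw [SModEq.sub_mem, smul_top_eq] at this
      rw [map_sub]
      have : L i - PowerSeries.coeff i (q k) ∈ (m ^ k : Ideal R) := by
        have h' := (m ^ k : Ideal R).neg_mem this
        simpa using h'
      simpa [hQdef, coeff_mk] using this
    refine ⟨Q, ?_⟩
    have hzero : Q - T Q = 0 := by
      refine eq_zero_of_coeffs_mem _ fun k i => ?_
      have hsplit : Q - T Q = (Q - q (k + 1)) + (T (q k) - T Q) := by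
        rw [hqs k]; ring
      rw [hsplit, map_add]
      refine (m ^ k : Ideal R).add_mem ?_ ?_
      · exact Ideal.pow_le_pow_right (Nat.le_succ k) (hQq (k + 1) i)
      · rw [hTsub]
        exact Ideal.pow_le_pow_right (Nat.le_succ k) (hcontr (hQq k) i)
    have := sub_eq_zero.mp hzero
    exact this
  obtain ⟨Q, hQfix⟩ := hQex
  set r : Polynomial R := trunc n (f - Q * P) with hrdef
  have hdiv : f = Q * α + (r : PowerSeries R) := by
    have hUQ : U * Q = sh n (f - Q * P) := by
      calc U * Q = U * (V * sh n (f - Q * P)) := by rw [← hQfix]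
        _ = (U * V) * sh n (f - Q * P) := by ring
        _ = sh n (f - Q * P) := by rw [hUV, one_mul]
    have := trunc_add_sh n (f - Q * P)
    calc f = Q * P + ((r : PowerSeries R) + X ^ n * sh n (f - Q * P)) := by
          rw [hrdef, this]; ring
      _ = Q * P + ((r : PowerSeries R) + X ^ n * (U * Q)) := by rw [hUQ]
      _ = Q * (P + X ^ n * U) + (r : PowerSeries R) := by ring
      _ = Q * α + (r : PowerSeries R) := by rw [hdecomp]
  refine ⟨⟨Q, r⟩, ⟨degree_trunc_lt _ _, hdiv⟩, ?_⟩
  -- uniqueness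
  rintro ⟨q₁, r₁⟩ ⟨hdeg₁, heq₁⟩
  have huniq : ∀ (q₂ : PowerSeries R) (r₂ : Polynomial R), r₂.degree < n →
      f = q₂ * α + (r₂ : PowerSeries R) → q₁ = q₂ ∧ r₁ = r₂ := by
    intro q₂ r₂ hdeg₂ heq₂
    set d : PowerSeries R := q₁ - q₂ with hddef
    have hds : d * α = ((r₂ : PowerSeries R) - (r₁ : PowerSeries R)) := by
      have : q₁ * α + (r₁ : PowerSeries R) = q₂ * α + (r₂ : PowerSeries R) := by
        rw [← heq₁, ← heq₂]
      linear_combination this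
    have hshs : sh n ((r₂ : PowerSeries R) - (r₁ : PowerSeries R)) = 0 := by
      rw [sh_sub, sh_poly n hdeg₂, sh_poly n hdeg₁, sub_zero]
    have hdfix : d = -(V * sh n (d * P)) := by
      have h1 : d * P + X ^ n * (d * U) = d * α := by
        rw [← hdecomp]; ring
      have h2 : sh n (d * P) + d * U = 0 := by
        have := congrArg (sh n) h1
        rw [sh_add, sh_X_pow_mul, hds, hshs] at this
        exact this
      have h3 : d * U = -sh n (d * P) := eq_neg_of_add_eq_zero_left (by linear_combination h2)
      calc d = d * (U * V) := by rw [hUV, mul_one]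
        _ = (d * U) * V := by ring
        _ = -sh n (d * P) * V := by rw [h3]
        _ = -(V * sh n (d * P)) := by ring
    have hdk : ∀ k i, PowerSeries.coeff i d ∈ (m ^ k : Ideal R) := by
      intro k
      induction k with
      | zero => intro i; rw [pow_zero, Ideal.one_eq_top]; exact Submodule.mem_top
      | succ k ih =>
          intro i
          rw [hdfix, map_neg]
          exact (m ^ (k + 1) : Ideal R).neg_mem (hcontr ih i)
    have hd0 : d = 0 := eq_zero_of_coeffs_mem d hdk
    have hq : q₁ = q₂ := sub_eq_zero.mp hd0
    refine ⟨hq, ?_⟩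
    apply Polynomial.coe_inj.mp
    have : q₁ * α + (r₁ : PowerSeries R) = q₂ * α + (r₂ : PowerSeries R) := by
      rw [← heq₁, ← heq₂]
    rw [hq] at this
    linear_combination this
  obtain ⟨h1, h2⟩ := huniq Q r (degree_trunc_lt _ _) hdiv
  exact Prod.ext h1 h2

end WPrep


/-- Weierstrass preparation theorem: if `R` is a local commutative ring, complete with respect
to its maximal ideal `m`, and `α ∈ R⟦x⟧` satisfies `α ≡ aₙ xⁿ mod (m, x^(n+1))` with `aₙ` a
unit, then there is a unique factorization `α = ε · g` with `ε` a unit of `R⟦x⟧` and `g` a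
monic polynomial of degree `n` all of whose lower coefficients lie in `m`. -/
theorem weierstrass_preparation
    {R : Type*} [CommRing R] [IsLocalRing R]
    [IsAdicComplete (IsLocalRing.maximalIdeal R) R]
    (n : ℕ) (α : PowerSeries R)
    (hlow : ∀ i : ℕ, i < n → PowerSeries.coeff i α ∈ IsLocalRing.maximalIdeal R)
    (hunit : IsUnit (PowerSeries.coeff n α)) :
    ∃! p : PowerSeries R × Polynomial R,
      IsUnit p.1 ∧ p.2.Monic ∧ p.2.degree = n ∧
      (∀ i : ℕ, i < n → p.2.coeff i ∈ IsLocalRing.maximalIdeal R) ∧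
      α = p.1 * (p.2 : PowerSeries R) := by
  classical
  obtain ⟨⟨q, r⟩, ⟨hdeg, heq⟩, huniq⟩ := WPrep.division n α hlow hunit (X ^ n)
  simp only at hdeg heq huniq
  -- `q` is a unit
  have hq : IsUnit q := by
    rw [PowerSeries.isUnit_iff_constantCoeff]
    rw [← IsLocalRing.notMem_maximalIdeal]
    intro hmem
    have h1 : PowerSeries.coeff n (X ^ n : PowerSeries R) = 1 := by
      simp [PowerSeries.coeff_X_pow]
    have hrn : PowerSeries.coeff n (r : PowerSeries R) = 0 := by
      rw [Polynomial.coeff_coe]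
      exact Polynomial.coeff_eq_zero_of_degree_lt hdeg
    have hqa : PowerSeries.coeff n (q * α) ∈ IsLocalRing.maximalIdeal R := by
      rw [PowerSeries.coeff_mul]
      refine Ideal.sum_mem _ fun p hp => ?_
      rw [Finset.HasAntidiagonal.mem_antidiagonal] at hp
      rcases Nat.lt_or_ge p.2 n with h | h
      · exact Ideal.mul_mem_left _ _ (hlow p.2 h)
      · have hp2 : p.2 = n := le_antisymm (by omega) h
        have hp1 : p.1 = 0 := by omega
        rw [hp1, PowerSeries.coeff_zero_eq_constantCoeff]
        exact Ideal.mul_mem_right _ _ hmem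
    have : (1 : R) ∈ IsLocalRing.maximalIdeal R := by
      have := congrArg (PowerSeries.coeff n) heq
      rw [h1, map_add, hrn, add_zero] at this
      rw [this]; exact hqa
    exact (IsLocalRing.maximalIdeal.isMaximal R).ne_top (Ideal.eq_top_iff_one _ |>.mpr this)
  set uq : (PowerSeries R)ˣ := hq.unit with huqdef
  have huqs : (uq : PowerSeries R) = q := hq.unit_spec
  set g : Polynomial R := Polynomial.X ^ n - r with hgdef
  have hdegX : (Polynomial.X ^ n : Polynomial R).degree = n := Polynomial.degree_X_pow n
  have hdegg : g.degree = n := by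
    rw [hgdef, Polynomial.degree_sub_eq_left_of_degree_lt (by rw [hdegX]; exact hdeg), hdegX]
  have hmonic : g.Monic := by
    have hnd : g.natDegree = n := Polynomial.natDegree_eq_of_degree_eq_some hdegg
    unfold Polynomial.Monic Polynomial.leadingCoeff
    rw [hnd, hgdef, Polynomial.coeff_sub, Polynomial.coeff_X_pow, if_pos rfl,
      Polynomial.coeff_eq_zero_of_degree_lt hdeg, sub_zero]
  have hgcoe : (g : PowerSeries R) = X ^ n - (r : PowerSeries R) := by
    rw [hgdef, Polynomial.coe_sub, Polynomial.coe_pow, Polynomial.coe_X]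
  have hqα : q * α = (g : PowerSeries R) := by
    rw [hgcoe, heq]; ring
  have hαfac : α = (uq⁻¹ : (PowerSeries R)ˣ) * (g : PowerSeries R) := by
    have : (uq⁻¹ : (PowerSeries R)ˣ) * (q * α) = α := by
      rw [← huqs, ← mul_assoc, Units.inv_mul, one_mul]
    rw [← this, hqα]
  refine ⟨⟨(uq⁻¹ : (PowerSeries R)ˣ), g⟩, ⟨(uq⁻¹).isUnit, hmonic, hdegg, ?_, hαfac⟩, ?_⟩
  · intro i hi
    rw [hgdef, Polynomial.coeff_sub, Polynomial.coeff_X_pow, if_neg (Nat.ne_of_lt hi), zero_sub]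
    have h0 : PowerSeries.coeff i (X ^ n : PowerSeries R) = 0 := by
      rw [PowerSeries.coeff_X_pow, if_neg (Nat.ne_of_lt hi)]
    have hqa : PowerSeries.coeff i (q * α) ∈ IsLocalRing.maximalIdeal R := by
      rw [PowerSeries.coeff_mul]
      refine Ideal.sum_mem _ fun p hp => ?_
      rw [Finset.HasAntidiagonal.mem_antidiagonal] at hp
      exact Ideal.mul_mem_left _ _ (hlow p.2 (by omega))
    have := congrArg (PowerSeries.coeff i) heq
    rw [h0, map_add] at this
    have : PowerSeries.coeff i (r : PowerSeries R) = -(PowerSeries.coeff i (q * α)) := by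
      linear_combination -this
    rw [Polynomial.coeff_coe] at this
    rw [this]
    simpa using hqa
  -- uniqueness
  · rintro ⟨ε', g'⟩ ⟨hu', hm', hd', hlow', heq'⟩
    simp only at hu' hm' hd' hlow' heq' ⊢
    set u' : (PowerSeries R)ˣ := hu'.unit with hu'def
    have hu's : (u' : PowerSeries R) = ε' := hu'.unit_spec
    set r' : Polynomial R := Polynomial.X ^ n - g' with hr'def
    have hnd' : g'.natDegree = n := Polynomial.natDegree_eq_of_degree_eq_some hd'
    have hdeg' : r'.degree < n := by
      rw [Polynomial.degree_lt_iff_coeff_zero]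
      intro k hk
      have hk' : (n : ℕ) ≤ k := by exact_mod_cast hk
      rw [hr'def, Polynomial.coeff_sub, Polynomial.coeff_X_pow]
      rcases Nat.eq_or_lt_of_le hk' with h | h
      · rw [if_pos h.symm, ← h]
        have : g'.coeff n = 1 := by
          have := hm'
          unfold Polynomial.Monic Polynomial.leadingCoeff at this
          rwa [hnd'] at this
        rw [this]; ring
      · rw [if_neg (by omega), Polynomial.coeff_eq_zero_of_natDegree_lt (by omega)]
        ring
    have hg'coe : (g' : PowerSeries R) = X ^ n - (r' : PowerSeries R) := by
      rw [hr'def, Polynomial.coe_sub, Polynomial.coe_pow, Polynomial.coe_X]; ring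
    have hdiv' : (X ^ n : PowerSeries R) = (u'⁻¹ : (PowerSeries R)ˣ) * α + (r' : PowerSeries R) := by
      have : (u'⁻¹ : (PowerSeries R)ˣ) * α = (g' : PowerSeries R) := by
        rw [heq', ← hu's, ← mul_assoc, Units.inv_mul, one_mul]
      rw [this, hg'coe]; ring
    have := huniq ((u'⁻¹ : (PowerSeries R)ˣ), r') ⟨hdeg', hdiv'⟩
    have hq1 : ((u'⁻¹ : (PowerSeries R)ˣ) : PowerSeries R) = q := congrArg Prod.fst this
    have hr1 : r' = r := congrArg Prod.snd this
    have huu : u'⁻¹ = uq := Units.ext (by rw [hq1, huqs])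
    refine Prod.ext ?_ ?_
    · show ε' = _
      rw [← hu's, ← huu, inv_inv]
    · show g' = g
      rw [hgdef, ← hr1, hr'def]; ring
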